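/- For every δ > 0 and constant c > 0, if a ≤ 2^n/n^{t+0.9} and p ≥ c/n^t, then for all sufficiently large n, C(2^n, a) · p^a ≤ exp(δ·p·m) where m = C(n, floor(n/2)). -/

import Mathlib

open Real Filter Finset

private lemma cb_sq (k : ℕ) (hk : 1 ≤ k) :
    (16 : ℝ) ^ k ≤ 4 * k * (Nat.centralBinom k : ℝ) ^ 2 := by
  induction k with
  | zero => omega
  | succ k ih =>
    rcases Nat.lt_or_ge k 1 with h | h
    · interval_cases k
      norm_num [Nat.centralBinom, Nat.choose]
    · have IH := ih h
      have key : ((k : ℝ) + 1) * (Nat.centralBinom (k + 1) : ℝ)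
          = 2 * (2 * k + 1) * (Nat.centralBinom k : ℝ) := by
        exact_mod_cast Nat.succ_mul_centralBinom_succ k
      have hk0 : (1 : ℝ) ≤ (k : ℝ) := by exact_mod_cast h
      have hcb0 : (0 : ℝ) ≤ (Nat.centralBinom k : ℝ) := by positivity
      have h16 : (0 : ℝ) < 16 ^ k := by positivity
      have hsq : ((k : ℝ) + 1) ^ 2 * (Nat.centralBinom (k + 1) : ℝ) ^ 2
          = 4 * (2 * k + 1) ^ 2 * (Nat.centralBinom k : ℝ) ^ 2 := by
        have h2 := congrArg (fun z => z ^ 2) key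
        simp only [mul_pow] at h2
        linear_combination h2
      have hpos : (0 : ℝ) < ((k : ℝ) + 1) ^ 2 := by positivity
      rw [← mul_le_mul_iff_right₀ hpos]
      calc ((k : ℝ) + 1) ^ 2 * 16 ^ (k + 1)
          = 16 * ((k : ℝ) + 1) ^ 2 * 16 ^ k := by ring
        _ ≤ 16 * ((k : ℝ) + 1) ^ 2 * (4 * k * (Nat.centralBinom k : ℝ) ^ 2) := by
            apply mul_le_mul_of_nonneg_left IH; positivity
        _ ≤ 4 * ((k : ℝ) + 1) * (4 * (2 * k + 1) ^ 2 * (Nat.centralBinom k : ℝ) ^ 2) := by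
            nlinarith [sq_nonneg ((Nat.centralBinom k : ℝ)), sq_nonneg ((k:ℝ) - 1)]
        _ = ((k : ℝ) + 1) ^ 2 * (4 * ((k : ℕ) + 1 : ℕ) * (Nat.centralBinom (k + 1) : ℝ) ^ 2) := by
            push_cast
            linear_combination (-(4*((k:ℝ)+1))) * hsq

/-- Lower bound on the middle binomial coefficient: `2^n ≤ 4 √n · C(n, n/2)`. -/
private lemma middle_binom_lb (n : ℕ) (hn : 2 ≤ n) :
    (2 : ℝ) ^ n ≤ 4 * Real.sqrt n * (n.choose (n / 2) : ℝ) := by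
  set k := n / 2 with hkdef
  have hk1 : 1 ≤ k := by omega
  have h2k : 2 * k ≤ n := by omega
  have hn2k : n ≤ 2 * k + 1 := by omega
  have hcb := cb_sq k hk1
  have hmk : (Nat.centralBinom k : ℝ) ≤ (n.choose (n / 2) : ℝ) := by
    have : (2 * k).choose k ≤ n.choose k := Nat.choose_le_choose k h2k
    exact_mod_cast this
  set m := (n.choose (n / 2) : ℝ) with hmdef
  have hm0 : (0 : ℝ) ≤ m := by positivity
  have hcb0 : (0 : ℝ) ≤ (Nat.centralBinom k : ℝ) := by positivity
  have hx0 : (0 : ℝ) ≤ (n : ℝ) := by positivity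
  have hs : Real.sqrt (n : ℝ) ^ 2 = (n : ℝ) := Real.sq_sqrt hx0
  have hs0 : (0 : ℝ) ≤ Real.sqrt (n : ℝ) := Real.sqrt_nonneg _
  have hkn : (k : ℝ) ≤ (n : ℝ) := by exact_mod_cast Nat.div_le_self n 2
  have hsq : ((2 : ℝ) ^ n) ^ 2 ≤ (4 * Real.sqrt n * m) ^ 2 := by
    have h1 : ((2 : ℝ) ^ n) ^ 2 ≤ 4 * 16 ^ k := by
      have : ((2 : ℝ) ^ n) ^ 2 = 4 ^ n := by
        rw [← pow_mul, show (4:ℝ) = 2^2 from by norm_num, ← pow_mul]; ring_nf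
      rw [this]
      calc (4:ℝ) ^ n ≤ 4 ^ (2 * k + 1) :=
            pow_le_pow_right₀ (by norm_num) hn2k
        _ = 4 * 16 ^ k := by rw [pow_succ, pow_mul]; norm_num [mul_comm]
    have h2 : 4 * ((16:ℝ) ^ k) ≤ 4 * (4 * k * (Nat.centralBinom k : ℝ) ^ 2) := by
      linarith
    have h3 : 4 * (4 * (k:ℝ) * (Nat.centralBinom k : ℝ) ^ 2) ≤ 16 * (n:ℝ) * m ^ 2 := by
      have hsq2 : (Nat.centralBinom k : ℝ) ^ 2 ≤ m ^ 2 := pow_le_pow_left₀ hcb0 hmk 2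
      have : (k:ℝ) * (Nat.centralBinom k : ℝ) ^ 2 ≤ (n:ℝ) * m ^ 2 :=
        mul_le_mul hkn hsq2 (by positivity) hx0
      linarith
    have h4 : (4 * Real.sqrt n * m) ^ 2 = 16 * (n:ℝ) * m ^ 2 := by
      rw [mul_pow, mul_pow, hs]; ring
    rw [h4]; linarith
  have hb0 : (0:ℝ) ≤ 4 * Real.sqrt n * m := by positivity
  calc (2:ℝ) ^ n = Real.sqrt (((2:ℝ) ^ n) ^ 2) := (Real.sqrt_sq (by positivity)).symm
    _ ≤ Real.sqrt ((4 * Real.sqrt n * m) ^ 2) := Real.sqrt_le_sqrt hsq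
    _ = 4 * Real.sqrt n * m := Real.sqrt_sq hb0

/-- a single binomial term is at most the whole binomial expansion. -/
private lemma binom_term_le (N a : ℕ) (θ : ℝ) (hθ : 0 ≤ θ) :
    (N.choose a : ℝ) * θ ^ a ≤ (1 + θ) ^ N := by
  rcases le_or_gt a N with h | h
  · have hmem : a ∈ Finset.range (N + 1) := Finset.mem_range.mpr (by omega)
    have hexp : (θ + 1) ^ N
        = ∑ k ∈ Finset.range (N + 1), θ ^ k * 1 ^ (N - k) * (N.choose k : ℝ) :=
      add_pow θ 1 N
    have hsingle :
        θ ^ a * 1 ^ (N - a) * (N.choose a : ℝ)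
          ≤ ∑ k ∈ Finset.range (N + 1), θ ^ k * 1 ^ (N - k) * (N.choose k : ℝ) :=
      Finset.single_le_sum (f := fun k => θ ^ k * 1 ^ (N - k) * (N.choose k : ℝ))
        (fun i _ => by positivity) hmem
    calc (N.choose a : ℝ) * θ ^ a = θ ^ a * 1 ^ (N - a) * (N.choose a : ℝ) := by ring
      _ ≤ (θ + 1) ^ N := by rw [hexp]; exact hsingle
      _ = (1 + θ) ^ N := by ring
  · rw [Nat.choose_eq_zero_of_lt h]
    simp only [Nat.cast_zero, zero_mul]
    positivity

set_option maxHeartbeats 1000000 in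
theorem fingerprint_count_S1 (t : ℕ) (ht : 1 ≤ t) (δ c : ℝ)
    (hδ : 0 < δ) (hc : 0 < c) :
    ∃ n₀ : ℕ, ∀ n ≥ n₀, ∀ a : ℕ, ∀ p : ℝ,
      (a : ℝ) ≤ 2 ^ n / (n : ℝ) ^ ((t : ℝ) + 0.9) →
      c / (n : ℝ) ^ t ≤ p → p ≤ 1 →
      (Nat.choose (2 ^ n) a : ℝ) * p ^ a ≤
        Real.exp (δ * p * (n.choose (n / 2) : ℝ)) := by
  set δ' := min δ 1 with hδ'def
  have hδ'0 : 0 < δ' := lt_min hδ one_pos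
  have hδ'1 : δ' ≤ 1 := min_le_right _ _
  have hδ'δ : δ' ≤ δ := min_le_left _ _
  set K : ℝ := δ' * c / 8 with hKdef
  have hK : 0 < K := by positivity
  set A : ℝ := max 0 (Real.log (8 / δ')) with hAdef
  have hA0 : 0 ≤ A := le_max_left _ _
  set B : ℝ := max 1 ((A + 5 / 2) / K) with hBdef
  have htend : Tendsto (fun n : ℕ => (n : ℝ) ^ (0.2 : ℝ)) atTop atTop :=
    (tendsto_rpow_atTop (by norm_num)).comp tendsto_natCast_atTop_atTop
  obtain ⟨n₀, hn₀⟩ := eventually_atTop.mp (htend.eventually_ge_atTop B)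
  refine ⟨max n₀ 2, ?_⟩
  intro n hn a p ha hpc hp1
  have hn2 : 2 ≤ n := le_trans (le_max_right _ _) hn
  have hBy := hn₀ n (le_trans (le_max_left _ _) hn)
  set x := (n : ℝ) with hxdef
  have hx2 : (2 : ℝ) ≤ x := by rw [hxdef]; exact_mod_cast hn2
  have hx0 : (0 : ℝ) < x := by linarith
  have hx1 : (1 : ℝ) ≤ x := by linarith
  have hp0 : 0 < p := lt_of_lt_of_le (by positivity) hpc
  set m := (n.choose (n / 2) : ℝ) with hmdef
  have hm0 : (0 : ℝ) < m := by
    have := Nat.choose_pos (Nat.div_le_self n 2)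
    rw [hmdef]; exact_mod_cast this
  set s := Real.sqrt x with hsdef
  have hs0 : 0 < s := Real.sqrt_pos.mpr hx0
  have hmlow : (2 : ℝ) ^ n ≤ 4 * s * m := middle_binom_lb n hn2
  have hmup : m ≤ 2 ^ n := by
    have h1 : n.choose (n / 2) ≤ 2 ^ n := by
      calc n.choose (n / 2) ≤ ∑ i ∈ Finset.range (n + 1), n.choose i :=
            Finset.single_le_sum (fun i _ => Nat.zero_le _)
              (Finset.mem_range.mpr (by omega))
        _ = 2 ^ n := Nat.sum_range_choose n
    rw [hmdef]; exact_mod_cast h1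
  have hN0 : (0 : ℝ) < 2 ^ n := by positivity
  set θ := δ' * p * m / (2 * 2 ^ n) with hθdef
  have hθ0 : 0 < θ := by positivity
  set R := 2 * 2 ^ n / (δ' * m) with hRdef
  have hR1 : 1 ≤ R := by
    rw [hRdef, le_div_iff₀ (by positivity)]
    have h := mul_le_mul hδ'1 hmup hm0.le zero_le_one
    linarith
  have hR0 : 0 < R := lt_of_lt_of_le one_pos hR1
  have hpθ : p = θ * R := by
    rw [hθdef, hRdef]; field_simp
  -- the scalar inequality L ≤ K x^{0.4}
  set L : ℝ := Real.log (8 / δ') + (1 / 2) * Real.log x with hLdef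
  have hL0 : 0 ≤ L := by
    have h8 : (1 : ℝ) ≤ 8 / δ' := by
      rw [le_div_iff₀ hδ'0]; linarith
    have := Real.log_nonneg h8
    have := Real.log_nonneg hx1
    rw [hLdef]; linarith
  have hfin : L ≤ K * x ^ (0.4 : ℝ) := by
    set y := x ^ (0.2 : ℝ) with hydef
    have hy1 : (1 : ℝ) ≤ y := Real.one_le_rpow hx1 (by norm_num)
    have hy0 : (0 : ℝ) < y := by linarith
    have hlogx : Real.log x ≤ 5 * y := by
      have h1 : Real.log y = 0.2 * Real.log x := Real.log_rpow hx0 _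
      have h2 : Real.log y ≤ y - 1 := Real.log_le_sub_one_of_pos hy0
      linarith
    have hAy : A + 5 / 2 ≤ K * y := by
      have : (A + 5 / 2) / K ≤ y := le_trans (le_max_right _ _) hBy
      rwa [div_le_iff₀ hK, mul_comm] at this
    have hy2 : y * y = x ^ (0.4 : ℝ) := by
      rw [hydef, ← Real.rpow_add hx0]; norm_num
    have hAlog : Real.log (8 / δ') ≤ A := le_max_right _ _
    have h5 : (A + 5 / 2) * y ≤ K * (y * y) := by
      have h6 := mul_le_mul_of_nonneg_right hAy hy0.le
      calc (A + 5 / 2) * y ≤ K * y * y := h6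
        _ = K * (y * y) := by ring
    have h6 : A * 1 ≤ A * y := mul_le_mul_of_nonneg_left hy1 hA0
    rw [← hy2]
    calc L = Real.log (8 / δ') + (1 / 2) * Real.log x := hLdef
      _ ≤ A + (5 / 2) * y := by linarith [hlogx, hAlog]
      _ ≤ A * y + (5 / 2) * y := by linarith [h6]
      _ = (A + 5 / 2) * y := by ring
      _ ≤ K * (y * y) := h5
  -- log R ≤ L
  have hRle : R ≤ 8 * s / δ' := by
    rw [hRdef, div_le_div_iff₀ (by positivity) hδ'0]
    have h := mul_le_mul_of_nonneg_left hmlow hδ'0.le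
    linarith
  have hlogR : Real.log R ≤ L := by
    have h1 : Real.log R ≤ Real.log (8 * s / δ') := Real.log_le_log hR0 hRle
    have h2 : Real.log (8 * s / δ') = Real.log (8 / δ') + (1 / 2) * Real.log x := by
      rw [show 8 * s / δ' = 8 / δ' * s from by ring,
        Real.log_mul (by positivity) hs0.ne', hsdef, Real.log_sqrt hx0.le]
      ring
    rw [hLdef]; linarith
  -- core: a log R ≤ δ' p m / 2
  have hs_eq : s = x ^ (0.5 : ℝ) := by
    rw [hsdef, Real.sqrt_eq_rpow]; norm_num
  have hLs : L * s ≤ K * x ^ (0.9 : ℝ) := by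
    have h1 : L * s ≤ K * x ^ (0.4 : ℝ) * x ^ (0.5 : ℝ) := by
      rw [hs_eq]
      exact mul_le_mul_of_nonneg_right hfin (Real.rpow_nonneg hx0.le _)
    have h2 : K * x ^ (0.4 : ℝ) * x ^ (0.5 : ℝ) = K * x ^ (0.9 : ℝ) := by
      rw [mul_assoc, ← Real.rpow_add hx0]; norm_num
    linarith
  have hmge : 2 ^ n / (4 * s) ≤ m := by
    rw [div_le_iff₀ (by positivity)]; linarith [hmlow]
  have hkey : (2 ^ n / x ^ ((t : ℝ) + 0.9)) * L ≤ δ' * p * m / 2 := by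
    have hxt : (0 : ℝ) < x ^ t := by positivity
    have h09 : x ^ ((t : ℝ) + 0.9) = x ^ t * x ^ (0.9 : ℝ) := by
      rw [Real.rpow_add hx0, Real.rpow_natCast]
    have e2 : δ' * (c / x ^ t) * (2 ^ n / (4 * s)) / 2
        = δ' * c * 2 ^ n / (8 * (x ^ t * s)) := by
      field_simp; ring
    have step1 : (2 ^ n / x ^ ((t : ℝ) + 0.9)) * L
        ≤ δ' * c * 2 ^ n / (8 * (x ^ t * s)) := by
      rw [h09, div_mul_eq_mul_div, div_le_div_iff₀ (by positivity) (by positivity)]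
      have h8 : 8 * (L * s) ≤ δ' * c * x ^ (0.9 : ℝ) := by
        have h8K2 : 8 * (K * x ^ (0.9 : ℝ)) = δ' * c * x ^ (0.9 : ℝ) := by
          rw [hKdef]; ring
        linarith [hLs]
      have := mul_le_mul_of_nonneg_left h8
        (show (0 : ℝ) ≤ 2 ^ n * x ^ t by positivity)
      linarith [this]
    have step2 : δ' * c * 2 ^ n / (8 * (x ^ t * s))
        ≤ δ' * p * m / 2 := by
      rw [← e2]
      have hA2 : δ' * (c / x ^ t) ≤ δ' * p := mul_le_mul_of_nonneg_left hpc hδ'0.le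
      have hB2 : δ' * (c / x ^ t) * (2 ^ n / (4 * s)) ≤ δ' * p * m :=
        mul_le_mul hA2 hmge (by positivity) (by positivity)
      linarith
    linarith
  have hcore : (a : ℝ) * Real.log R ≤ δ' * p * m / 2 := by
    have h1 : (a : ℝ) * Real.log R ≤ (a : ℝ) * L :=
      mul_le_mul_of_nonneg_left hlogR (Nat.cast_nonneg a)
    have h2 : (a : ℝ) * L ≤ (2 ^ n / x ^ ((t : ℝ) + 0.9)) * L :=
      mul_le_mul_of_nonneg_right ha hL0
    exact le_trans h1 (le_trans h2 hkey)
  -- assemble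
  have hA1 : (Nat.choose (2 ^ n) a : ℝ) * θ ^ a ≤ (1 + θ) ^ (2 ^ n) :=
    binom_term_le _ _ _ hθ0.le
  have hB1 : ((1 : ℝ) + θ) ^ (2 ^ n : ℕ) ≤ Real.exp (δ' * p * m / 2) := by
    have h1 : (1 : ℝ) + θ ≤ Real.exp θ := by
      have := Real.add_one_le_exp θ; linarith
    calc ((1 : ℝ) + θ) ^ (2 ^ n : ℕ) ≤ (Real.exp θ) ^ (2 ^ n : ℕ) :=
          pow_le_pow_left₀ (by positivity) h1 _
      _ = Real.exp (((2 ^ n : ℕ) : ℝ) * θ) := (Real.exp_nat_mul θ _).symm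
      _ = Real.exp (δ' * p * m / 2) := by
          congr 1
          rw [hθdef]
          push_cast
          field_simp
  have hC : R ^ a ≤ Real.exp (δ' * p * m / 2) := by
    have h1 : R ^ a = Real.exp ((a : ℝ) * Real.log R) := by
      rw [Real.exp_nat_mul, Real.exp_log hR0]
    rw [h1]
    exact Real.exp_le_exp.mpr hcore
  calc (Nat.choose (2 ^ n) a : ℝ) * p ^ a
      = (Nat.choose (2 ^ n) a : ℝ) * θ ^ a * R ^ a := by
        rw [hpθ, mul_pow]; ring
    _ ≤ Real.exp (δ' * p * m / 2) * Real.exp (δ' * p * m / 2) := by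
        apply mul_le_mul (le_trans hA1 hB1) hC (by positivity) (Real.exp_pos _).le
    _ = Real.exp (δ' * p * m) := by rw [← Real.exp_add]; ring_nf
    _ ≤ Real.exp (δ * p * m) := by
        apply Real.exp_le_exp.mpr
        have h := mul_le_mul_of_nonneg_right hδ'δ (mul_nonneg hp0.le hm0.le)
        calc δ' * p * m = δ' * (p * m) := by ring
          _ ≤ δ * (p * m) := h
          _ = δ * p * m := by ring
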